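/- arXiv:2207.10325 — 2 statements merged into one kernel-verified Lean document; each statement's English description precedes it below -/
import Mathlib

section
/- Single dual solution suffices for satisfaction filtering: consider the 0/1-cost instance where every index of a complete variable-value set gets cost 0 if it belongs to the original domain and 1 otherwise, with an ideal LP formulation whose optimum is z* = 0. Then there exists a single dual optimal solution ũ such that, for every index ij, the exact reduced cost R_{ij} ≥ 1 (i.e., ij lies in no zero-cost integral solution) if and only if r_{ij}(ũ) > 0. -/
open Matrix

/-- Primal feasibility for the LP with partition constraints:
Ax ≥ b, Σ_{j : grp j = i} x_j = 1 for each group i, x ≥ 0. -/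
def Feas {m n E : ℕ} (A : Matrix (Fin m) (Fin E) ℝ) (b : Fin m → ℝ)
    (grp : Fin E → Fin n) (x : Fin E → ℝ) : Prop :=
  b ≤ A.mulVec x ∧ (∀ i : Fin n, (∑ j : Fin E, if grp j = i then x j else 0) = 1) ∧ 0 ≤ x

/-- A 0/1 (integral) vector. -/
def Integral {E : ℕ} (x : Fin E → ℝ) : Prop := ∀ j, x j = 0 ∨ x j = 1

/-- Dual feasibility: u_q ≥ 0 and u_{grp j} + Σ_q A_{qj} u_q ≤ c_j for each index j. -/
def DualFeas {m n E : ℕ} (A : Matrix (Fin m) (Fin E) ℝ) (c : Fin E → ℝ)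
    (grp : Fin E → Fin n) (uq : Fin m → ℝ) (uv : Fin n → ℝ) : Prop :=
  0 ≤ uq ∧ ∀ j : Fin E, uv (grp j) + (∑ q : Fin m, A q j * uq q) ≤ c j

/-- Dual objective w(u) = b·u_q + Σ_i u_i. -/
def dualObj {m n : ℕ} (b : Fin m → ℝ) (uq : Fin m → ℝ) (uv : Fin n → ℝ) : ℝ :=
  b ⬝ᵥ uq + ∑ i : Fin n, uv i

/-- Reduced cost r_j(u) = c_j − u_{grp j} − Σ_q A_{qj} u_q. -/
def rc {m n E : ℕ} (A : Matrix (Fin m) (Fin E) ℝ) (c : Fin E → ℝ)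
    (grp : Fin E → Fin n) (uq : Fin m → ℝ) (uv : Fin n → ℝ) (j : Fin E) : ℝ :=
  c j - uv (grp j) - ∑ q : Fin m, A q j * uq q



theorem dotProduct_sum' {ρ ι : Type*} [Fintype ρ] (s : Finset ι) (y : ρ → ℝ) (f : ι → ρ → ℝ) :
    y ⬝ᵥ (∑ i ∈ s, f i) = ∑ i ∈ s, y ⬝ᵥ f i := by
  simp only [dotProduct, Finset.sum_apply, Finset.mul_sum]
  exact Finset.sum_comm

theorem farkas_fin {ρ : Type*} [Fintype ρ] :
    ∀ (k : ℕ) (v : Fin k → ρ → ℝ) (b : ρ → ℝ),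
      (∃ l : Fin k → ℝ, (∀ i, 0 ≤ l i) ∧ ∑ i, l i • v i = b) ∨
      (∃ y : ρ → ℝ, (∀ i, 0 ≤ y ⬝ᵥ v i) ∧ y ⬝ᵥ b < 0) := by
  intro k
  induction k with
  | zero =>
    intro v b
    by_cases hb : b = 0
    · exact Or.inl ⟨0, fun i => le_refl 0, by simp [hb]⟩
    · refine Or.inr ⟨-b, fun i => i.elim0, ?_⟩
      have h0 : (0:ℝ) ≤ b ⬝ᵥ b := Finset.sum_nonneg fun i _ => mul_self_nonneg _
      have h1 : (0:ℝ) < b ⬝ᵥ b := by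
        rcases lt_or_eq_of_le h0 with h | h
        · exact h
        · exact absurd ((dotProduct_self_eq_zero).mp h.symm) hb
      simpa [neg_dotProduct] using neg_neg_iff_pos.mpr h1
  | succ k ih =>
    intro v b
    have hsplit : ∀ (l : Fin (k+1) → ℝ), ∑ i, l i • v i
        = (∑ i : Fin k, l i.castSucc • v i.castSucc) + l (Fin.last k) • v (Fin.last k) :=
      fun l => Fin.sum_univ_castSucc (fun i => l i • v i)
    rcases ih (fun i => v i.castSucc) b with ⟨l, hl, hsum⟩ | ⟨y, hy, hyb⟩
    · refine Or.inl ⟨Fin.snoc l 0, ?_, ?_⟩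
      · intro i
        refine Fin.lastCases ?_ ?_ i
        · simp
        · intro j; simpa using hl j
      · rw [hsplit]
        simpa using hsum
    · by_cases hya : 0 ≤ y ⬝ᵥ v (Fin.last k)
      · exact Or.inr ⟨y, fun i => Fin.lastCases hya (fun j => hy j) i, hyb⟩
      · push_neg at hya
        have hya' : y ⬝ᵥ v (Fin.last k) ≠ 0 := ne_of_lt hya
        rcases ih (fun i => v i.castSucc - (y ⬝ᵥ v i.castSucc / y ⬝ᵥ v (Fin.last k)) • v (Fin.last k))
            (b - (y ⬝ᵥ b / y ⬝ᵥ v (Fin.last k)) • v (Fin.last k)) with ⟨l, hl, hsum⟩ | ⟨z, hz, hzb⟩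
        · set ya := y ⬝ᵥ v (Fin.last k) with hya_def
          set S : ℝ := ∑ i : Fin k, l i * (y ⬝ᵥ v i.castSucc / ya) with hS
          have hb_eq : b = (∑ i : Fin k, l i • v i.castSucc) + (y ⬝ᵥ b / ya - S) • v (Fin.last k) := by
            have h1 : ∑ i : Fin k, l i • (v i.castSucc - (y ⬝ᵥ v i.castSucc / ya) • v (Fin.last k))
                = (∑ i : Fin k, l i • v i.castSucc) - S • v (Fin.last k) := by
              rw [hS, Finset.sum_smul]
              rw [← Finset.sum_sub_distrib]
              congr 1
              funext i
              rw [smul_sub, smul_smul]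
            rw [h1] at hsum
            have := hsum
            rw [sub_smul]
            rw [sub_eq_sub_iff_sub_eq_sub] at this
            abel_nf
            abel_nf at this
            linear_combination (norm := abel_nf) -this
          have hμ : 0 ≤ y ⬝ᵥ b / ya - S := by
            have h2 : S = (∑ i : Fin k, l i * (y ⬝ᵥ v i.castSucc)) / ya := by
              rw [hS, Finset.sum_div]
              exact Finset.sum_congr rfl fun i _ => by ring
            have hSe : y ⬝ᵥ b / ya - S = (y ⬝ᵥ b - ∑ i : Fin k, l i * (y ⬝ᵥ v i.castSucc)) / ya := by
              rw [h2, div_sub_div_same]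
            rw [hSe]
            have hnum : y ⬝ᵥ b - ∑ i : Fin k, l i * (y ⬝ᵥ v i.castSucc) ≤ 0 := by
              have : 0 ≤ ∑ i : Fin k, l i * (y ⬝ᵥ v i.castSucc) :=
                Finset.sum_nonneg fun i _ => mul_nonneg (hl i) (hy i)
              linarith
            exact div_nonneg_iff.mpr (Or.inr ⟨hnum, le_of_lt hya⟩)
          refine Or.inl ⟨Fin.snoc l (y ⬝ᵥ b / ya - S), ?_, ?_⟩
          · intro i
            refine Fin.lastCases ?_ ?_ i
            · simpa using hμ
            · intro j; simpa using hl j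
          · rw [hsplit]
            simp only [Fin.snoc_castSucc, Fin.snoc_last]
            exact hb_eq.symm
        · refine Or.inr ⟨z - (z ⬝ᵥ v (Fin.last k) / (y ⬝ᵥ v (Fin.last k))) • y, ?_, ?_⟩
          · intro i
            refine Fin.lastCases ?_ ?_ i
            · simp only [sub_dotProduct, smul_dotProduct, smul_eq_mul]
              rw [div_mul_cancel₀ _ hya']
              simp
            · intro j
              have h1 := hz j
              simp only [dotProduct_sub, dotProduct_smul, smul_eq_mul] at h1
              simp only [sub_dotProduct, smul_dotProduct, smul_eq_mul]
              have e : z ⬝ᵥ v (Fin.last k) / (y ⬝ᵥ v (Fin.last k)) * (y ⬝ᵥ v j.castSucc)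
                  = y ⬝ᵥ v j.castSucc / (y ⬝ᵥ v (Fin.last k)) * (z ⬝ᵥ v (Fin.last k)) := by ring
              linarith
          · simp only [dotProduct_sub, dotProduct_smul, smul_eq_mul] at hzb
            simp only [sub_dotProduct, smul_dotProduct, smul_eq_mul]
            have e : z ⬝ᵥ v (Fin.last k) / (y ⬝ᵥ v (Fin.last k)) * (y ⬝ᵥ b)
                = y ⬝ᵥ b / (y ⬝ᵥ v (Fin.last k)) * (z ⬝ᵥ v (Fin.last k)) := by ring
            linarith


theorem farkas_cone {ρ ι : Type*} [Fintype ρ] [Fintype ι] (v : ι → ρ → ℝ) (b : ρ → ℝ) :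
    (∃ l : ι → ℝ, (∀ i, 0 ≤ l i) ∧ ∑ i, l i • v i = b) ∨
    (∃ y : ρ → ℝ, (∀ i, 0 ≤ y ⬝ᵥ v i) ∧ y ⬝ᵥ b < 0) := by
  obtain e := Fintype.equivFin ι
  rcases farkas_fin (Fintype.card ι) (fun j => v (e.symm j)) b with ⟨l, hl, hs⟩ | ⟨y, hy, hyb⟩
  · refine Or.inl ⟨fun i => l (e i), fun i => hl _, ?_⟩
    rw [← hs]
    rw [← Equiv.sum_comp e.symm (fun i => l (e i) • v i)]
    simp
  · refine Or.inr ⟨y, fun i => ?_, hyb⟩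
    simpa using hy (e i)

theorem farkas_ineq {ρ κ : Type*} [Fintype ρ] [Fintype κ] [DecidableEq ρ]
    (N : Matrix ρ κ ℝ) (f : ρ → ℝ)
    (h : ¬ ∃ y : κ → ℝ, N.mulVec y ≤ f) :
    ∃ w : ρ → ℝ, (∀ p, 0 ≤ w p) ∧ (∀ j, ∑ p, w p * N p j = 0) ∧ f ⬝ᵥ w < 0 := by
  classical
  set v : (κ ⊕ κ) ⊕ ρ → ρ → ℝ := fun i => match i with
    | Sum.inl (Sum.inl j) => fun p => N p j
    | Sum.inl (Sum.inr j) => fun p => -(N p j)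
    | Sum.inr r => Pi.single r 1 with hv
  rcases farkas_cone v f with ⟨l, hl, hsum⟩ | ⟨w, hw, hwf⟩
  · exfalso
    apply h
    refine ⟨fun j => l (Sum.inl (Sum.inl j)) - l (Sum.inl (Sum.inr j)), ?_⟩
    intro p
    have hp := congrFun hsum p
    rw [Finset.sum_apply] at hp
    rw [Fintype.sum_sum_type] at hp
    rw [Fintype.sum_sum_type] at hp
    simp only [hv, Pi.smul_apply, smul_eq_mul] at hp
    have hsingle : ∑ r : ρ, l (Sum.inr r) * (Pi.single (M := fun _ => ℝ) r 1) p = l (Sum.inr p) := by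
      rw [Finset.sum_eq_single p]
      · simp
      · intro r _ hr
        rw [Pi.single_apply]
        simp [Ne.symm hr]
      · simp
    rw [hsingle] at hp
    have hmv : N.mulVec (fun j => l (Sum.inl (Sum.inl j)) - l (Sum.inl (Sum.inr j))) p
        = ∑ j : κ, l (Sum.inl (Sum.inl j)) * N p j + ∑ j : κ, l (Sum.inl (Sum.inr j)) * -(N p j) := by
      rw [Matrix.mulVec, dotProduct]
      rw [← Finset.sum_add_distrib]
      exact Finset.sum_congr rfl fun j _ => by ring
    rw [hmv, ← hp]
    have : 0 ≤ l (Sum.inr p) := hl _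
    linarith
  · refine ⟨w, ?_, ?_, ?_⟩
    · intro p
      have := hw (Sum.inr p)
      simpa [hv, dotProduct_single] using this
    · intro j
      have h1 := hw (Sum.inl (Sum.inl j))
      have h2 := hw (Sum.inl (Sum.inr j))
      simp only [hv, dotProduct, dotProduct_neg] at h1 h2
      have : ∑ p : ρ, w p * -(N p j) = -∑ p : ρ, w p * N p j := by
        rw [← Finset.sum_neg_distrib]
        exact Finset.sum_congr rfl fun p _ => by ring
      rw [this] at h2
      linarith
    · rw [dotProduct_comm]
      exact hwf


theorem dual_exists {m n E : ℕ} (A : Matrix (Fin m) (Fin E) ℝ) (b : Fin m → ℝ)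
    (c' : Fin E → ℝ) (grp : Fin E → Fin n)
    (hfeas : ∃ x0, Feas A b grp x0)
    (hlb : ∀ x, Feas A b grp x → 0 ≤ c' ⬝ᵥ x) :
    ∃ uq uv, DualFeas A c' grp uq uv ∧ 0 ≤ dualObj b uq uv := by
  classical
  by_contra hcon
  push_neg at hcon
  set N : Matrix (Fin E ⊕ (Fin m ⊕ Unit)) (Fin m ⊕ Fin n) ℝ := fun p k =>
    match p, k with
    | Sum.inl j, Sum.inl q => A q j
    | Sum.inl j, Sum.inr i => if grp j = i then 1 else 0
    | Sum.inr (Sum.inl q), Sum.inl q' => if q = q' then -1 else 0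
    | Sum.inr (Sum.inl _), Sum.inr _ => 0
    | Sum.inr (Sum.inr _), Sum.inl q => -(b q)
    | Sum.inr (Sum.inr _), Sum.inr _ => -1 with hN
  set f : Fin E ⊕ (Fin m ⊕ Unit) → ℝ := fun p =>
    match p with
    | Sum.inl j => c' j
    | Sum.inr _ => 0 with hf
  have hnosol : ¬ ∃ y : (Fin m ⊕ Fin n) → ℝ, N.mulVec y ≤ f := by
    rintro ⟨y, hy⟩
    set uq : Fin m → ℝ := fun q => y (Sum.inl q) with huq
    set uv : Fin n → ℝ := fun i => y (Sum.inr i) with huv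
    have hmv : ∀ p, N.mulVec y p = ∑ q : Fin m, N p (Sum.inl q) * uq q
        + ∑ i : Fin n, N p (Sum.inr i) * uv i := by
      intro p
      rw [Matrix.mulVec, dotProduct, Fintype.sum_sum_type]
    have h1 : ∀ j : Fin E, uv (grp j) + (∑ q : Fin m, A q j * uq q) ≤ c' j := by
      intro j
      have := hy (Sum.inl j)
      rw [hmv] at this
      simp only [hN, hf, ite_mul, one_mul, zero_mul, Finset.sum_ite_eq, Finset.mem_univ,
        if_true] at this
      linarith
    have h2 : 0 ≤ uq := by
      intro q
      show (0:ℝ) ≤ uq q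
      have := hy (Sum.inr (Sum.inl q))
      rw [hmv] at this
      simp only [hN, hf, ite_mul, neg_one_mul, zero_mul, mul_zero, Finset.sum_ite_eq,
        Finset.mem_univ, if_true, Finset.sum_const_zero, add_zero] at this
      linarith
    have h3 : 0 ≤ dualObj b uq uv := by
      have := hy (Sum.inr (Sum.inr ()))
      rw [hmv] at this
      simp only [hN, hf] at this
      rw [dualObj, dotProduct]
      have e1 : ∑ q : Fin m, -(b q) * uq q = -(∑ q : Fin m, b q * uq q) := by
        rw [← Finset.sum_neg_distrib]; exact Finset.sum_congr rfl fun q _ => by ring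
      have e2 : ∑ i : Fin n, (-1 : ℝ) * uv i = -(∑ i : Fin n, uv i) := by
        rw [← Finset.sum_neg_distrib]; exact Finset.sum_congr rfl fun i _ => by ring
      rw [e1, e2] at this
      linarith
    exact absurd h3 (not_le.mpr (hcon uq uv ⟨h2, h1⟩))
  obtain ⟨w, hw0, hwcol, hwf⟩ := farkas_ineq N f hnosol
  set x : Fin E → ℝ := fun j => w (Sum.inl j) with hx
  set z : Fin m → ℝ := fun q => w (Sum.inr (Sum.inl q)) with hz
  set μ : ℝ := w (Sum.inr (Sum.inr ())) with hμ
  have hcolsplit : ∀ k, ∑ p, w p * N p k = ∑ j : Fin E, x j * N (Sum.inl j) k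
      + (∑ q : Fin m, z q * N (Sum.inr (Sum.inl q)) k + μ * N (Sum.inr (Sum.inr ())) k) := by
    intro k
    rw [Fintype.sum_sum_type, Fintype.sum_sum_type]
    simp [hx, hz, hμ]
  have hA : ∀ q : Fin m, ∑ j : Fin E, x j * A q j = z q + μ * b q := by
    intro q
    have := hwcol (Sum.inl q)
    rw [hcolsplit] at this
    simp only [hN, mul_ite, mul_neg_one, mul_zero, Finset.sum_ite_eq', Finset.mem_univ,
      if_true] at this
    linarith
  have hG : ∀ i : Fin n, (∑ j : Fin E, if grp j = i then x j else 0) = μ := by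
    intro i
    have := hwcol (Sum.inr i)
    rw [hcolsplit] at this
    simp only [hN] at this
    have e : ∑ j : Fin E, x j * (if grp j = i then (1:ℝ) else 0)
        = ∑ j : Fin E, (if grp j = i then x j else 0) := by
      exact Finset.sum_congr rfl fun j _ => by split <;> simp
    rw [e] at this
    simp at this
    linarith
  have hcost : ∑ j : Fin E, c' j * x j < 0 := by
    have : f ⬝ᵥ w = ∑ j : Fin E, c' j * x j := by
      rw [dotProduct, Fintype.sum_sum_type]
      simp [hf, hx]
    rw [this] at hwf
    exact hwf
  have hxnn : ∀ j, 0 ≤ x j := fun j => hw0 _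
  have hznn : ∀ q, 0 ≤ z q := fun q => hw0 _
  have hμnn : 0 ≤ μ := hw0 _
  rcases eq_or_lt_of_le hμnn with hμ0 | hμpos
  · -- μ = 0 : unbounded ray
    obtain ⟨x0, hx0⟩ := hfeas
    set S : ℝ := ∑ j : Fin E, c' j * x j with hS
    have hSneg : S < 0 := hcost
    set t : ℝ := (c' ⬝ᵥ x0 + 1) / (-S) with ht
    have htpos : 0 < t := div_pos (by have := hlb x0 hx0; linarith) (by linarith)
    have hfeas1 : Feas A b grp (fun j => x0 j + t * x j) := by
      refine ⟨?_, ?_, ?_⟩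
      · intro q
        have hAx : ∑ j : Fin E, A q j * x j = z q := by
          have := hA q
          rw [← hμ0] at this
          have e : ∑ j : Fin E, A q j * x j = ∑ j : Fin E, x j * A q j :=
            Finset.sum_congr rfl fun j _ => by ring
          rw [e, this]; ring
        have : A.mulVec (fun j => x0 j + t * x j) q
            = A.mulVec x0 q + t * (∑ j : Fin E, A q j * x j) := by
          rw [Matrix.mulVec, Matrix.mulVec, dotProduct, dotProduct, Finset.mul_sum,
            ← Finset.sum_add_distrib]
          exact Finset.sum_congr rfl fun j _ => by ring
        rw [this, hAx]
        have h1 := hx0.1 q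
        have h2 := hznn q
        have : 0 ≤ t * z q := mul_nonneg (le_of_lt htpos) h2
        dsimp only at h1 ⊢
        linarith
      · intro i
        have e : ∑ j : Fin E, (if grp j = i then x0 j + t * x j else 0)
            = (∑ j : Fin E, if grp j = i then x0 j else 0)
              + t * (∑ j : Fin E, if grp j = i then x j else 0) := by
          rw [Finset.mul_sum, ← Finset.sum_add_distrib]
          exact Finset.sum_congr rfl fun j _ => by split <;> simp
        rw [e, hx0.2.1 i, hG i, ← hμ0]
        ring
      · intro j
        have := hx0.2.2 j
        have h2 := mul_nonneg (le_of_lt htpos) (hxnn j)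
        dsimp only at this ⊢
        linarith
    have := hlb _ hfeas1
    have hce : c' ⬝ᵥ (fun j => x0 j + t * x j) = c' ⬝ᵥ x0 + t * S := by
      rw [dotProduct, dotProduct, hS, Finset.mul_sum, ← Finset.sum_add_distrib]
      exact Finset.sum_congr rfl fun j _ => by ring
    rw [hce] at this
    have hSne : S ≠ 0 := ne_of_lt hSneg
    have htS : t * S = -(c' ⬝ᵥ x0 + 1) := by
      rw [ht, div_mul_eq_mul_div, mul_div_assoc, div_neg, div_self hSne]
      ring
    rw [htS] at this
    linarith
  · -- μ > 0 : feasible point with negative cost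
    have hfeas1 : Feas A b grp (fun j => x j / μ) := by
      refine ⟨?_, ?_, ?_⟩
      · intro q
        have : A.mulVec (fun j => x j / μ) q = (∑ j : Fin E, x j * A q j) / μ := by
          rw [Matrix.mulVec, dotProduct, Finset.sum_div]
          exact Finset.sum_congr rfl fun j _ => by ring
        rw [this, hA q]
        rw [add_div, mul_div_cancel_left₀ _ (ne_of_gt hμpos)]
        have : 0 ≤ z q / μ := div_nonneg (hznn q) (le_of_lt hμpos)
        linarith
      · intro i
        have e : ∑ j : Fin E, (if grp j = i then x j / μ else 0)
            = (∑ j : Fin E, if grp j = i then x j else 0) / μ := by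
          rw [Finset.sum_div]
          exact Finset.sum_congr rfl fun j _ => by split <;> simp
        rw [e, hG i, div_self (ne_of_gt hμpos)]
      · intro j
        exact div_nonneg (hxnn j) (le_of_lt hμpos)
    have := hlb _ hfeas1
    have hce : c' ⬝ᵥ (fun j => x j / μ) = (∑ j : Fin E, c' j * x j) / μ := by
      rw [dotProduct, Finset.sum_div]
      exact Finset.sum_congr rfl fun j _ => by ring
    rw [hce] at this
    have : (∑ j : Fin E, c' j * x j) / μ < 0 := div_neg_of_neg_of_pos hcost hμpos
    linarith [hlb _ hfeas1, hce ▸ hlb _ hfeas1]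


theorem rc_nonneg {m n E : ℕ} {A : Matrix (Fin m) (Fin E) ℝ} {c : Fin E → ℝ}
    {grp : Fin E → Fin n} {uq : Fin m → ℝ} {uv : Fin n → ℝ}
    (hu : DualFeas A c grp uq uv) (j : Fin E) : 0 ≤ rc A c grp uq uv j := by
  have := hu.2 j
  rw [rc]
  linarith

theorem wd_identity {m n E : ℕ} (A : Matrix (Fin m) (Fin E) ℝ) (b : Fin m → ℝ)
    (c : Fin E → ℝ) (grp : Fin E → Fin n) (x : Fin E → ℝ) (uq : Fin m → ℝ) (uv : Fin n → ℝ)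
    (hx : Feas A b grp x) :
    c ⬝ᵥ x = dualObj b uq uv + (∑ j : Fin E, rc A c grp uq uv j * x j)
      + (uq ⬝ᵥ (A.mulVec x) - uq ⬝ᵥ b) := by
  classical
  have T1 : ∑ j : Fin E, uv (grp j) * x j = ∑ i : Fin n, uv i := by
    have e1 : ∀ j : Fin E, uv (grp j) * x j
        = ∑ i : Fin n, (if grp j = i then uv i * x j else 0) := by
      intro j
      rw [Finset.sum_ite_eq]
      simp
    rw [Finset.sum_congr rfl fun j _ => e1 j, Finset.sum_comm]
    refine Finset.sum_congr rfl fun i _ => ?_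
    have : ∑ j : Fin E, (if grp j = i then uv i * x j else 0)
        = uv i * ∑ j : Fin E, (if grp j = i then x j else 0) := by
      rw [Finset.mul_sum]
      exact Finset.sum_congr rfl fun j _ => by split <;> simp
    rw [this, hx.2.1 i, mul_one]
  have T2 : ∑ j : Fin E, (∑ q : Fin m, A q j * uq q) * x j = uq ⬝ᵥ (A.mulVec x) := by
    rw [dotProduct]
    rw [Finset.sum_congr rfl fun j (_ : j ∈ Finset.univ) =>
      (Finset.sum_mul Finset.univ (fun q => A q j * uq q) (x j))]
    rw [Finset.sum_comm]
    refine Finset.sum_congr rfl fun q _ => ?_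
    rw [Matrix.mulVec, dotProduct, Finset.mul_sum]
    exact Finset.sum_congr rfl fun j _ => by ring
  have expand : ∑ j : Fin E, rc A c grp uq uv j * x j
      = c ⬝ᵥ x - (∑ j : Fin E, uv (grp j) * x j)
        - ∑ j : Fin E, (∑ q : Fin m, A q j * uq q) * x j := by
    rw [dotProduct, ← Finset.sum_sub_distrib, ← Finset.sum_sub_distrib]
    exact Finset.sum_congr rfl fun j _ => by rw [rc]; ring
  rw [expand, T1, T2, dualObj, dotProduct_comm b uq]
  ring

theorem weak_duality {m n E : ℕ} {A : Matrix (Fin m) (Fin E) ℝ} {b : Fin m → ℝ}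
    {c : Fin E → ℝ} {grp : Fin E → Fin n} {x : Fin E → ℝ} {uq : Fin m → ℝ} {uv : Fin n → ℝ}
    (hx : Feas A b grp x) (hu : DualFeas A c grp uq uv) :
    dualObj b uq uv ≤ c ⬝ᵥ x := by
  rw [wd_identity A b c grp x uq uv hx]
  have h1 : 0 ≤ ∑ j : Fin E, rc A c grp uq uv j * x j :=
    Finset.sum_nonneg fun j _ => mul_nonneg (rc_nonneg hu j) (hx.2.2 j)
  have h2 : uq ⬝ᵥ b ≤ uq ⬝ᵥ (A.mulVec x) :=
    dotProduct_le_dotProduct_of_nonneg_left hx.1 hu.1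
  linarith

theorem compl_slack {m n E : ℕ} {A : Matrix (Fin m) (Fin E) ℝ} {b : Fin m → ℝ}
    {c : Fin E → ℝ} {grp : Fin E → Fin n} {x : Fin E → ℝ} {uq : Fin m → ℝ} {uv : Fin n → ℝ}
    (hx : Feas A b grp x) (hu : DualFeas A c grp uq uv)
    (hobj : dualObj b uq uv = 0) (hcx : c ⬝ᵥ x = 0) {j : Fin E} (hxj : x j = 1) :
    rc A c grp uq uv j = 0 := by
  have hid := wd_identity A b c grp x uq uv hx
  rw [hobj, hcx] at hid
  have h2 : uq ⬝ᵥ b ≤ uq ⬝ᵥ (A.mulVec x) :=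
    dotProduct_le_dotProduct_of_nonneg_left hx.1 hu.1
  have h1 : ∑ j : Fin E, rc A c grp uq uv j * x j = 0 := by
    have h1a : 0 ≤ ∑ j : Fin E, rc A c grp uq uv j * x j :=
      Finset.sum_nonneg fun j _ => mul_nonneg (rc_nonneg hu j) (hx.2.2 j)
    linarith
  have := (Finset.sum_eq_zero_iff_of_nonneg
    (fun j _ => mul_nonneg (rc_nonneg hu j) (hx.2.2 j))).mp h1 j (Finset.mem_univ j)
  rw [hxj, mul_one] at this
  exact this


/-- In a feasible solution with `x j = 1`, all other indices of `j`'s group are zero. -/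
theorem group_zero {m n E : ℕ} {A : Matrix (Fin m) (Fin E) ℝ} {b : Fin m → ℝ}
    {grp : Fin E → Fin n} {x : Fin E → ℝ} (hx : Feas A b grp x) {j : Fin E} (hxj : x j = 1)
    {k : Fin E} (hk : grp k = grp j) (hkj : k ≠ j) : x k = 0 := by
  classical
  have hsum := hx.2.1 (grp j)
  rw [← Finset.add_sum_erase Finset.univ _ (Finset.mem_univ j)] at hsum
  simp only [eq_self_iff_true, if_true, hxj] at hsum
  have hrest : ∑ k ∈ Finset.univ.erase j, (if grp k = grp j then x k else 0) = 0 := by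
    linarith
  have hterm := (Finset.sum_eq_zero_iff_of_nonneg (fun k _ => by
    split
    · exact hx.2.2 k
    · exact le_refl 0)).mp hrest k (Finset.mem_erase.mpr ⟨hkj, Finset.mem_univ k⟩)
  rw [if_pos hk] at hterm
  exact hterm


/-- Single dual solution suffices for satisfaction filtering: for the 0/1-cost instance
of an ideal LP formulation with partition constraints whose optimum is z* = 0, where
every index lies in some feasible integral solution and R_j denotes the (attained)
optimum of the problem restricted by x_j = 1 (= the exact reduced cost since z* = 0),
there exists a single dual optimal solution ũ such that for every index j,
R_j ≥ 1 ↔ r_j(ũ) > 0. -/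
theorem stmt10 {m n E : ℕ} (A : Matrix (Fin m) (Fin E) ℝ) (b : Fin m → ℝ)
    (c : Fin E → ℝ) (grp : Fin E → Fin n)
    (hc : ∀ j : Fin E, c j = 0 ∨ c j = 1)
    (hz : IsLeast {z | ∃ x : Fin E → ℝ, Feas A b grp x ∧ c ⬝ᵥ x = z} 0)
    (hideal : ∀ c' : Fin E → ℝ, (∃ x0 : Fin E → ℝ, Feas A b grp x0) →
      ∃ xt : Fin E → ℝ, Feas A b grp xt ∧ Integral xt ∧
        ∀ y : Fin E → ℝ, Feas A b grp y → c' ⬝ᵥ xt ≤ c' ⬝ᵥ y)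
    (hsupp : ∀ j : Fin E, ∃ x : Fin E → ℝ, Feas A b grp x ∧ Integral x ∧ x j = 1)
    (R : Fin E → ℝ)
    (hR : ∀ j : Fin E,
      IsLeast {z | ∃ x : Fin E → ℝ, Feas A b grp x ∧ x j = 1 ∧ c ⬝ᵥ x = z} (R j)) :
    ∃ (uq : Fin m → ℝ) (uv : Fin n → ℝ),
      DualFeas A c grp uq uv ∧ dualObj b uq uv = 0 ∧
      ∀ j : Fin E, (1 ≤ R j ↔ 0 < rc A c grp uq uv j) := by

  classical
  obtain ⟨⟨xstar, hxstar, hcxstar⟩, hlb0⟩ := hz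
  have hlb : ∀ x, Feas A b grp x → 0 ≤ c ⬝ᵥ x := fun x hx => hlb0 ⟨x, hx, rfl⟩
  have hcnn : ∀ k, 0 ≤ c k := by
    intro k; rcases hc k with h | h <;> rw [h] <;> norm_num
  -- Step A: dichotomy for R
  have hdich : ∀ j : Fin E, ¬ (1 ≤ R j) → R j = 0 := by
    intro j hnot
    have hRlt : R j < 1 := not_le.mp hnot
    obtain ⟨xR, hxR, hxRj, hcR⟩ := (hR j).1
    have hR0 : 0 ≤ R j := hcR ▸ hlb xR hxR
    set c' : Fin E → ℝ := fun k => c k + (if grp k = grp j ∧ k ≠ j then 2 else 0) with hc'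
    have hc'nn : ∀ k, 0 ≤ c' k := by
      intro k; rw [hc']; dsimp only
      have := hcnn k; split <;> linarith
    obtain ⟨xt, hxt, hxtInt, hxtOpt⟩ := hideal c' ⟨xstar, hxstar⟩
    have hagree : ∀ x : Fin E → ℝ, Feas A b grp x → x j = 1 → c' ⬝ᵥ x = c ⬝ᵥ x := by
      intro x hx hxj
      rw [dotProduct, dotProduct]
      refine Finset.sum_congr rfl fun k _ => ?_
      rw [hc']; dsimp only
      by_cases hcase : grp k = grp j ∧ k ≠ j
      · rw [group_zero hx hxj hcase.1 hcase.2]; ring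
      · rw [if_neg hcase]; ring
    have hub : c' ⬝ᵥ xt ≤ R j := by
      calc c' ⬝ᵥ xt ≤ c' ⬝ᵥ xR := hxtOpt xR hxR
        _ = c ⬝ᵥ xR := hagree xR hxR hxRj
        _ = R j := hcR
    have hxtj : xt j = 1 := by
      rcases hxtInt j with h0 | h1
      · exfalso
        have hsum := hxt.2.1 (grp j)
        have hex : ∃ k, (if grp k = grp j then xt k else 0) ≠ 0 := by
          by_contra hall
          push_neg at hall
          rw [Finset.sum_eq_zero (fun k _ => hall k)] at hsum
          norm_num at hsum
        obtain ⟨k, hk⟩ := hex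
        have hgk : grp k = grp j := by
          by_contra h; rw [if_neg h] at hk; exact hk rfl
        rw [if_pos hgk] at hk
        have hxtk : xt k = 1 := (hxtInt k).resolve_left hk
        have hkj : k ≠ j := by
          intro h; rw [h, h0] at hxtk; norm_num at hxtk
        have hsingle : c' k * xt k ≤ c' ⬝ᵥ xt := by
          rw [dotProduct]
          exact Finset.single_le_sum
            (fun i _ => mul_nonneg (hc'nn i) (hxt.2.2 i)) (Finset.mem_univ k)
        have : c' k * xt k = c k + 2 := by
          rw [hxtk, mul_one, hc']; dsimp only
          rw [if_pos ⟨hgk, hkj⟩]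
        rw [this] at hsingle
        have := hcnn k
        linarith
      · exact h1
    have hge : R j ≤ c ⬝ᵥ xt := (hR j).2 ⟨xt, hxt, hxtj, rfl⟩
    have hEq : c ⬝ᵥ xt = R j :=
      le_antisymm (by rw [← hagree xt hxt hxtj]; exact hub) hge
    -- each term of c ⬝ᵥ xt is 0
    have hterm0 : ∀ k, c k * xt k = 0 := by
      intro k
      rcases hc k with h | h
      · rw [h]; ring
      rcases hxtInt k with h2 | h2
      · rw [h2]; ring
      exfalso
      have hsingle : c k * xt k ≤ c ⬝ᵥ xt := by
        rw [dotProduct]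
        exact Finset.single_le_sum
          (fun i _ => mul_nonneg (hcnn i) (hxt.2.2 i)) (Finset.mem_univ k)
      rw [h, h2, mul_one, hEq] at hsingle
      linarith
    rw [← hEq, dotProduct, Finset.sum_eq_zero (fun k _ => hterm0 k)]
  -- Step B: one dual optimal solution per index
  have hdual : ∀ j : Fin E, ∃ uq uv, DualFeas A c grp uq uv ∧ dualObj b uq uv = 0 ∧
      (1 ≤ R j → (1:ℝ)/2 ≤ rc A c grp uq uv j) := by
    intro j
    by_cases hj : 1 ≤ R j
    · set ch : Fin E → ℝ := fun k => c k - (if k = j then 1/2 else 0) with hch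
      have hrel : ∀ x : Fin E → ℝ, ch ⬝ᵥ x = c ⬝ᵥ x - x j / 2 := by
        intro x
        rw [dotProduct, dotProduct]
        have e : ∀ k, ch k * x k = c k * x k - (if k = j then x k / 2 else 0) := by
          intro k; rw [hch]; dsimp only; split <;> ring
        rw [Finset.sum_congr rfl fun k _ => e k, Finset.sum_sub_distrib,
          Finset.sum_ite_eq' Finset.univ j (fun k => x k / 2)]
        simp
      obtain ⟨xt, hxt, hxtInt, hxtOpt⟩ := hideal ch ⟨xstar, hxstar⟩
      have h0xt : 0 ≤ ch ⬝ᵥ xt := by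
        rcases hxtInt j with h | h
        · rw [hrel, h]
          have := hlb xt hxt
          linarith
        · rw [hrel, h]
          have : R j ≤ c ⬝ᵥ xt := (hR j).2 ⟨xt, hxt, h, rfl⟩
          linarith
      have hlb' : ∀ x, Feas A b grp x → 0 ≤ ch ⬝ᵥ x :=
        fun x hx => le_trans h0xt (hxtOpt x hx)
      obtain ⟨uq, uv, hdf, hobj⟩ := dual_exists A b ch grp ⟨xstar, hxstar⟩ hlb'
      have hchle : ∀ k, ch k ≤ c k := by
        intro k; rw [hch]; dsimp only; split <;> linarith
      have hdfc : DualFeas A c grp uq uv :=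
        ⟨hdf.1, fun k => le_trans (hdf.2 k) (hchle k)⟩
      have hobj0 : dualObj b uq uv = 0 := by
        have h1 : dualObj b uq uv ≤ 0 := by
          have := weak_duality hxstar hdfc
          rw [hcxstar] at this
          exact this
        linarith
      have hrcj : (1:ℝ)/2 ≤ rc A c grp uq uv j := by
        have h2 := hdf.2 j
        have : ch j = c j - 1/2 := by rw [hch]; dsimp only; rw [if_pos rfl]
        rw [this] at h2
        rw [rc]
        linarith
      exact ⟨uq, uv, hdfc, hobj0, fun _ => hrcj⟩
    · refine ⟨0, 0, ⟨le_refl _, fun k => ?_⟩, by simp [dualObj], fun h => absurd h hj⟩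
      simp only [Pi.zero_apply, mul_zero, Finset.sum_const_zero, add_zero]
      exact hcnn k
  choose Uq Uv hDF hOBJ hRC using hdual
  set uqbar : Fin m → ℝ := fun q => (E:ℝ)⁻¹ * ∑ k : Fin E, Uq k q with huqbar
  set uvbar : Fin n → ℝ := fun i => (E:ℝ)⁻¹ * ∑ k : Fin E, Uv k i with huvbar
  have hswapA : ∀ j : Fin E, ∑ q : Fin m, A q j * uqbar q
      = (E:ℝ)⁻¹ * ∑ k : Fin E, ∑ q : Fin m, A q j * Uq k q := by
    intro j
    calc ∑ q : Fin m, A q j * uqbar q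
        = ∑ q : Fin m, ∑ k : Fin E, (E:ℝ)⁻¹ * (A q j * Uq k q) := by
          refine Finset.sum_congr rfl fun q _ => ?_
          rw [huqbar]; dsimp only
          rw [Finset.mul_sum, Finset.mul_sum]
          exact Finset.sum_congr rfl fun k _ => by ring
      _ = ∑ k : Fin E, ∑ q : Fin m, (E:ℝ)⁻¹ * (A q j * Uq k q) := Finset.sum_comm
      _ = (E:ℝ)⁻¹ * ∑ k : Fin E, ∑ q : Fin m, A q j * Uq k q := by
          rw [Finset.mul_sum]
          exact Finset.sum_congr rfl fun k _ => by rw [Finset.mul_sum]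
  have hrcbar : ∀ j : Fin E, rc A c grp uqbar uvbar j
      = (E:ℝ)⁻¹ * ∑ k : Fin E, rc A c grp (Uq k) (Uv k) j := by
    intro j
    have hEpos : (0:ℝ) < (E:ℝ) := by exact_mod_cast j.pos
    have hEne : (E:ℝ) ≠ 0 := ne_of_gt hEpos
    rw [rc, hswapA j]
    have e1 : ∑ k : Fin E, rc A c grp (Uq k) (Uv k) j
        = (E:ℝ) * c j - (∑ k : Fin E, Uv k (grp j)) - ∑ k : Fin E, ∑ q : Fin m, A q j * Uq k q := by
      simp only [rc]
      rw [Finset.sum_sub_distrib, Finset.sum_sub_distrib, Finset.sum_const,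
        Finset.card_univ, Fintype.card_fin, nsmul_eq_mul]
    rw [e1, huvbar]; dsimp only
    field_simp
  have hbarDF : DualFeas A c grp uqbar uvbar := by
    constructor
    · intro q
      show (0:ℝ) ≤ uqbar q
      rw [huqbar]; dsimp only
      exact mul_nonneg (inv_nonneg.mpr (Nat.cast_nonneg E))
        (Finset.sum_nonneg fun k _ => (hDF k).1 q)
    · intro j
      have h1 := hrcbar j
      rw [rc] at h1
      have h2 : 0 ≤ ∑ k : Fin E, rc A c grp (Uq k) (Uv k) j :=
        Finset.sum_nonneg fun k _ => rc_nonneg (hDF k) j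
      have hEnn : (0:ℝ) ≤ (E:ℝ)⁻¹ := inv_nonneg.mpr (Nat.cast_nonneg E)
      nlinarith [mul_nonneg hEnn h2]
  have hbarObj : dualObj b uqbar uvbar = 0 := by
    have e1 : b ⬝ᵥ uqbar = (E:ℝ)⁻¹ * ∑ k : Fin E, b ⬝ᵥ Uq k := by
      calc b ⬝ᵥ uqbar = ∑ q : Fin m, ∑ k : Fin E, (E:ℝ)⁻¹ * (b q * Uq k q) := by
            rw [dotProduct]
            refine Finset.sum_congr rfl fun q _ => ?_
            rw [huqbar]; dsimp only
            rw [Finset.mul_sum, Finset.mul_sum]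
            exact Finset.sum_congr rfl fun k _ => by ring
        _ = ∑ k : Fin E, ∑ q : Fin m, (E:ℝ)⁻¹ * (b q * Uq k q) := Finset.sum_comm
        _ = (E:ℝ)⁻¹ * ∑ k : Fin E, b ⬝ᵥ Uq k := by
            rw [Finset.mul_sum]
            exact Finset.sum_congr rfl fun k _ => by rw [dotProduct, Finset.mul_sum]
    have e2 : ∑ i : Fin n, uvbar i = (E:ℝ)⁻¹ * ∑ k : Fin E, ∑ i : Fin n, Uv k i := by
      calc ∑ i : Fin n, uvbar i = ∑ i : Fin n, ∑ k : Fin E, (E:ℝ)⁻¹ * Uv k i := by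
            refine Finset.sum_congr rfl fun i _ => ?_
            rw [huvbar]; dsimp only
            rw [Finset.mul_sum]
        _ = ∑ k : Fin E, ∑ i : Fin n, (E:ℝ)⁻¹ * Uv k i := Finset.sum_comm
        _ = (E:ℝ)⁻¹ * ∑ k : Fin E, ∑ i : Fin n, Uv k i := by
            rw [Finset.mul_sum]
            exact Finset.sum_congr rfl fun k _ => by rw [Finset.mul_sum]
    have hz0 : ∀ k : Fin E, b ⬝ᵥ Uq k + ∑ i : Fin n, Uv k i = 0 := fun k => hOBJ k
    rw [dualObj, e1, e2, ← mul_add, ← Finset.sum_add_distrib]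
    simp only [hz0, Finset.sum_const_zero, mul_zero]
  refine ⟨uqbar, uvbar, hbarDF, hbarObj, ?_⟩
  · -- the characterization
    intro j
    constructor
    · intro hj
      rw [hrcbar j]
      have hEpos : (0:ℝ) < (E:ℝ) := by exact_mod_cast j.pos
      have hsingle : rc A c grp (Uq j) (Uv j) j ≤ ∑ k : Fin E, rc A c grp (Uq k) (Uv k) j :=
        Finset.single_le_sum (fun k _ => rc_nonneg (hDF k) j) (Finset.mem_univ j)
      have := hRC j hj
      have : (0:ℝ) < ∑ k : Fin E, rc A c grp (Uq k) (Uv k) j := by linarith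
      positivity
    · intro hpos
      by_contra hnot
      have hR0 := hdich j hnot
      obtain ⟨xR, hxR, hxRj, hcR⟩ := (hR j).1
      have hcx0 : c ⬝ᵥ xR = 0 := by rw [hcR, hR0]
      have := compl_slack hxR hbarDF hbarObj hcx0 hxRj
      linarith
end

section
/- A complete family of n dual solutions exists: in an ideal LP formulation whose variables are partitioned into n groups S_1, …, S_n by the constraints Σ_{j∈S_i} x_j = 1, each group S_i is a set of pairwise incompatible indices; hence there exist n dual optimal solutions u¹, …, uⁿ such that for every index kl ∈ E there is some i with r_{kl}(uⁱ) = R_{kl}. -/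
open Finset


open Matrix

/-- Choose a value between two finite families. -/
lemma exists_between_families {α β : Type} [Fintype α] [Fintype β]
    (f : α → ℝ) (g : β → ℝ) (h : ∀ a b, g b ≤ f a) :
    ∃ t : ℝ, (∀ b, g b ≤ t) ∧ (∀ a, t ≤ f a) := by
  classical
  rcases isEmpty_or_nonempty β with hβ | hβ
  · rcases isEmpty_or_nonempty α with hα | hα
    · exact ⟨0, fun b => (IsEmpty.false b).elim, fun a => (IsEmpty.false a).elim⟩
    · refine ⟨univ.inf' univ_nonempty f, fun b => (IsEmpty.false b).elim, fun a => inf'_le _ (mem_univ a)⟩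
  · refine ⟨univ.sup' univ_nonempty g, fun b => le_sup' _ (mem_univ b), fun a => sup'_le _ _ fun b _ => h a b⟩

/-- Farkas lemma (infeasibility certificate), by Fourier–Motzkin elimination. -/
theorem farkas_aux : ∀ (q : ℕ) {P : Type} [Fintype P] (A : P → Fin q → ℝ) (b : P → ℝ),
    (¬ ∃ y : Fin q → ℝ, ∀ i, (∑ j, A i j * y j) ≤ b i) →
    ∃ z : P → ℝ, (∀ i, 0 ≤ z i) ∧ (∀ j, ∑ i, z i * A i j = 0) ∧ (∑ i, z i * b i) < 0 := by
  intro q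
  induction q with
  | zero =>
    intro P _ A b h
    push_neg at h
    obtain ⟨i0, hi0⟩ := h 0
    classical
    refine ⟨fun i => if i = i0 then 1 else 0, fun i => by positivity, fun j => j.elim0, ?_⟩
    simp only [ite_mul, one_mul, zero_mul, sum_ite_eq', mem_univ, if_pos]
    simpa using hi0
  | succ q ih =>
    intro P _ A b h
    classical
    set a : P → ℝ := fun i => A i (Fin.last q) with ha
    set Z := {i : P // a i = 0}
    set T := {i : P // 0 < a i}
    set N := {i : P // a i < 0}
    -- the Fourier–Motzkin eliminated system
    set B : Z ⊕ T × N → Fin q → ℝ := fun w j =>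
      match w with
      | .inl s => A s.1 j.castSucc
      | .inr (s, t) => (-a t.1) * A s.1 j.castSucc + a s.1 * A t.1 j.castSucc
      with hB
    set d : Z ⊕ T × N → ℝ := fun w =>
      match w with
      | .inl s => b s.1
      | .inr (s, t) => (-a t.1) * b s.1 + a s.1 * b t.1
      with hd
    have hFM : ¬ ∃ y : Fin q → ℝ, ∀ w, (∑ j, B w j * y j) ≤ d w := by
      rintro ⟨y, hy⟩
      set f : T → ℝ := fun s => (b s.1 - ∑ j, A s.1 j.castSucc * y j) / a s.1 with hf
      set g : N → ℝ := fun t => (b t.1 - ∑ j, A t.1 j.castSucc * y j) / a t.1 with hg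
      have hcross : ∀ s t, g t ≤ f s := by
        intro s t
        have h1 := hy (.inr (s, t))
        simp only [hB, hd] at h1
        rw [hg, hf, div_le_iff_of_neg t.2, div_mul_eq_mul_div, div_le_iff₀ s.2]
        have h2 : ∑ j, ((-a t.1) * A s.1 j.castSucc + a s.1 * A t.1 j.castSucc) * y j
            = (-a t.1) * ∑ j, A s.1 j.castSucc * y j + a s.1 * ∑ j, A t.1 j.castSucc * y j := by
          rw [mul_sum, mul_sum, ← sum_add_distrib]
          exact sum_congr rfl fun j _ => by ring
        rw [h2] at h1
        nlinarith [h1]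
      obtain ⟨t0, ht0g, ht0f⟩ := exists_between_families f g hcross
      apply h
      refine ⟨(Fin.snoc y t0 : Fin (q+1) → ℝ), fun i => ?_⟩
      have hs : (∑ j : Fin (q+1), A i j * (Fin.snoc y t0 : Fin (q+1) → ℝ) j)
          = (∑ j : Fin q, A i j.castSucc * y j) + a i * t0 := by
        rw [Fin.sum_univ_castSucc]
        simp [ha]
      rw [hs]
      rcases lt_trichotomy (a i) 0 with hneg | hzero | hpos
      · have := ht0g ⟨i, hneg⟩
        rw [hg, div_le_iff_of_neg hneg] at this
        linarith
      · have := hy (.inl ⟨i, hzero⟩)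
        simp only [hB, hd] at this
        rw [hzero]; linarith
      · have := ht0f ⟨i, hpos⟩
        rw [hf, le_div_iff₀ hpos] at this
        linarith
    obtain ⟨z', hz'0, hz'A, hz'b⟩ := ih B d hFM
    -- lift the certificate
    set coeff : Z ⊕ T × N → P → ℝ := fun w i =>
      match w with
      | .inl s => if s.1 = i then 1 else 0
      | .inr (s, t) => (if s.1 = i then -a t.1 else 0) + (if t.1 = i then a s.1 else 0)
      with hcoeff
    have key : ∀ v : P → ℝ, (∑ i, (∑ w, z' w * coeff w i) * v i)
        = ∑ s : Z, z' (.inl s) * v s.1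
          + ∑ w : T × N, z' (.inr w) * ((-a w.2.1) * v w.1.1 + a w.1.1 * v w.2.1) := by
      intro v
      have h1 : (∑ i, (∑ w, z' w * coeff w i) * v i)
          = ∑ w, z' w * ∑ i, coeff w i * v i := by
        simp only [sum_mul, mul_sum]
        rw [Finset.sum_comm]
        exact sum_congr rfl fun w _ => sum_congr rfl fun i _ => by ring
      rw [h1, Fintype.sum_sum_type]
      congr 1
      · refine sum_congr rfl fun s _ => ?_
        congr 1
        simp only [hcoeff, ite_mul, one_mul, zero_mul]
        rw [Finset.sum_ite_eq]
        simp
      · refine sum_congr rfl fun w _ => ?_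
        congr 1
        simp only [hcoeff, add_mul, ite_mul, zero_mul, sum_add_distrib]
        rw [Finset.sum_ite_eq, Finset.sum_ite_eq]
        simp
    refine ⟨fun i => ∑ w, z' w * coeff w i, ?_, ?_, ?_⟩
    · intro i
      refine sum_nonneg fun w _ => mul_nonneg (hz'0 w) ?_
      rcases w with s | ⟨s, t⟩
      · simp only [hcoeff]; positivity
      · simp only [hcoeff]
        have h1 : (0:ℝ) ≤ if (s.1:P) = i then -a t.1 else 0 := by
          by_cases hsi : (s.1:P) = i
          · simp only [if_pos hsi]; linarith [t.2]
          · simp [hsi]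
        have h2 : (0:ℝ) ≤ if (t.1:P) = i then a s.1 else 0 := by
          by_cases hti : (t.1:P) = i
          · simp only [if_pos hti]; linarith [s.2]
          · simp [hti]
        linarith
    · -- columns
      intro j
      simp only []
      rw [key (fun i => A i j)]
      refine Fin.lastCases ?_ (fun j' => ?_) j
      · have hz : ∀ s : Z, A (s.1 : P) (Fin.last q) = 0 := fun s => s.2
        rw [sum_congr rfl (fun s _ => by rw [hz s, mul_zero])]
        rw [sum_congr rfl (fun w (_ : w ∈ univ) => show
            z' (.inr w) * ((-a w.2.1) * A w.1.1 (Fin.last q) + a w.1.1 * A w.2.1 (Fin.last q)) = 0 by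
          show z' (.inr w) * ((-a w.2.1) * a w.1.1 + a w.1.1 * a w.2.1) = 0
          ring)]
        simp
      · have := hz'A j'
        rw [Fintype.sum_sum_type] at this
        simp only [hB] at this
        convert this using 2
    · -- rhs
      simp only []
      rw [key b]
      have := hz'b
      rw [Fintype.sum_sum_type] at this
      simp only [hd] at this
      calc (∑ s : Z, z' (.inl s) * b s.1)
            + ∑ w : T × N, z' (.inr w) * ((-a w.2.1) * b w.1.1 + a w.1.1 * b w.2.1)
          = (∑ s : Z, z' (.inl s) * d (.inl s)) + ∑ w : T × N, z' (.inr w) * d (.inr w) := by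
            congr 1
        _ < 0 := this

/-- Farkas with an arbitrary finite column type. -/
theorem farkas {C P : Type} [Fintype C] [Fintype P] (A : P → C → ℝ) (b : P → ℝ)
    (h : ¬ ∃ y : C → ℝ, ∀ i, (∑ j, A i j * y j) ≤ b i) :
    ∃ z : P → ℝ, (∀ i, 0 ≤ z i) ∧ (∀ j, ∑ i, z i * A i j = 0) ∧ (∑ i, z i * b i) < 0 := by
  classical
  set e := (Fintype.equivFin C).symm with he
  have h' : ¬ ∃ y : Fin (Fintype.card C) → ℝ, ∀ i, (∑ j, A i (e j) * y j) ≤ b i := by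
    rintro ⟨y, hy⟩
    refine h ⟨fun c => y (e.symm c), fun i => ?_⟩
    have h2 := hy i
    have h3 : ∑ j, A i (e j) * y j = ∑ c, A i c * y (e.symm c) := by
      rw [← Equiv.sum_comp e (fun c => A i c * y (e.symm c))]
      exact Finset.sum_congr rfl fun j _ => by rw [Equiv.symm_apply_apply]
    rwa [h3] at h2
  obtain ⟨z, hz0, hzA, hzb⟩ := farkas_aux _ (fun i j => A i (e j)) b h'
  refine ⟨z, hz0, fun c => ?_, hzb⟩
  have := hzA (e.symm c)
  simpa using this
lemma key_identity {m n E : ℕ} (A : Matrix (Fin m) (Fin E) ℝ) (b : Fin m → ℝ)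
    (c : Fin E → ℝ) (grp : Fin E → Fin n) (uq : Fin m → ℝ) (uv : Fin n → ℝ)
    (x : Fin E → ℝ) (hx : ∀ i : Fin n, (∑ j : Fin E, if grp j = i then x j else 0) = 1) :
    c ⬝ᵥ x - dualObj b uq uv
      = (∑ j, x j * rc A c grp uq uv j) + (∑ q, uq q * ((A.mulVec x) q - b q)) := by
  classical
  have hgrp : ∑ j, x j * uv (grp j) = ∑ i, uv i := by
    calc ∑ j, x j * uv (grp j) = ∑ j, ∑ i, if grp j = i then x j * uv i else 0 := by
          refine Finset.sum_congr rfl fun j _ => ?_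
          rw [Finset.sum_ite_eq]; simp
      _ = ∑ i, ∑ j, if grp j = i then x j * uv i else 0 := Finset.sum_comm
      _ = ∑ i, uv i * ∑ j, if grp j = i then x j else 0 := by
          refine Finset.sum_congr rfl fun i _ => ?_
          rw [Finset.mul_sum]
          refine Finset.sum_congr rfl fun j _ => ?_
          by_cases h : grp j = i <;> simp [h, mul_comm]
      _ = ∑ i, uv i := by simp [hx]
  have hswap : ∑ j, x j * ∑ q, A q j * uq q = ∑ q, uq q * (A.mulVec x) q := by
    simp only [Matrix.mulVec, dotProduct, Finset.mul_sum]
    rw [Finset.sum_comm]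
    exact Finset.sum_congr rfl fun q _ => Finset.sum_congr rfl fun j _ => by ring
  simp only [rc, dualObj, dotProduct, mul_sub, Finset.sum_sub_distrib]
  rw [hgrp, hswap]
  have h1 : ∑ j, c j * x j = ∑ j, x j * c j := Finset.sum_congr rfl fun j _ => mul_comm _ _
  have h2 : ∑ q, b q * uq q = ∑ q, uq q * b q := Finset.sum_congr rfl fun q _ => mul_comm _ _
  rw [h1, h2]
  ring

theorem strong_dual {m n E : ℕ} (A : Matrix (Fin m) (Fin E) ℝ) (b : Fin m → ℝ)
    (c' : Fin E → ℝ) (grp : Fin E → Fin n) (v : ℝ)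
    (hv : IsLeast {z | ∃ x : Fin E → ℝ, Feas A b grp x ∧ c' ⬝ᵥ x = z} v) :
    ∃ uq uv, DualFeas A c' grp uq uv ∧ dualObj b uq uv = v := by
  classical
  obtain ⟨xstar, hxstar, hcx⟩ := hv.1
  -- the dual system in variables y : Fin m ⊕ Fin n
  set K : (Fin E ⊕ (Fin m ⊕ Unit)) → (Fin m ⊕ Fin n) → ℝ := fun p w =>
    match p, w with
    | .inl j, .inl q => A q j
    | .inl j, .inr i => if grp j = i then 1 else 0
    | .inr (.inl q), .inl q' => if q = q' then -1 else 0
    | .inr (.inl _), .inr _ => 0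
    | .inr (.inr _), .inl q => -b q
    | .inr (.inr _), .inr _ => -1
    with hK
  set h : (Fin E ⊕ (Fin m ⊕ Unit)) → ℝ := fun p =>
    match p with
    | .inl j => c' j
    | .inr (.inl _) => 0
    | .inr (.inr _) => -v
    with hh
  have hfeas : ∃ y : (Fin m ⊕ Fin n) → ℝ, ∀ p, (∑ w, K p w * y w) ≤ h p := by
    by_contra hcon
    obtain ⟨z, hz0, hzK, hzh⟩ := farkas K h hcon
    set x : Fin E → ℝ := fun j => z (.inl j) with hxdef
    set s : Fin m → ℝ := fun q => z (.inr (.inl q)) with hsdef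
    set τ : ℝ := z (.inr (.inr default)) with hτdef
    have hcol1 : ∀ q : Fin m, ∑ j, x j * A q j = s q + τ * b q := by
      intro q
      have := hzK (.inl q)
      rw [Fintype.sum_sum_type, Fintype.sum_sum_type] at this
      simp only [hK, Finset.univ_unique, Finset.sum_singleton] at this
      simp only [mul_ite, mul_neg, mul_one, mul_zero, Finset.sum_ite_eq, Finset.sum_ite_eq',
        Finset.mem_univ, if_pos] at this
      linarith [this]
    have hcol2 : ∀ i : Fin n, (∑ j, if grp j = i then x j else 0) = τ := by
      intro i
      have := hzK (.inr i)
      rw [Fintype.sum_sum_type, Fintype.sum_sum_type] at this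
      simp only [hK, Finset.univ_unique, Finset.sum_singleton, mul_ite, mul_one,
        mul_zero, mul_neg, Finset.sum_const_zero] at this
      linarith [this]
    have hrhs : (∑ j, x j * c' j) + τ * (-v) < 0 := by
      have := hzh
      rw [Fintype.sum_sum_type, Fintype.sum_sum_type] at this
      simp only [hh, Finset.univ_unique, Finset.sum_singleton, mul_zero,
        Finset.sum_const_zero, mul_neg] at this
      linarith [this]
    have hτ0 : 0 ≤ τ := hz0 _
    rcases eq_or_lt_of_le hτ0 with hτz | hτpos
    · -- τ = 0 : all x j = 0, contradiction with hrhs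
      have hx0 : ∀ j, x j = 0 := by
        intro j
        have hsum := hcol2 (grp j)
        rw [← hτz] at hsum
        have : ∀ j' ∈ Finset.univ, (0:ℝ) ≤ if grp j' = grp j then x j' else 0 := by
          intro j' _
          by_cases h' : grp j' = grp j <;> simp [h', hxdef, hz0 (Sum.inl j')]
        have hle := Finset.single_le_sum this (Finset.mem_univ j)
        simp only [if_pos rfl] at hle
        have := hz0 (Sum.inl j)
        rw [hsum] at hle
        exact le_antisymm hle this
      have : ∑ j, x j * c' j = 0 := by
        refine Finset.sum_eq_zero fun j _ => by rw [hx0 j, zero_mul]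
      rw [this, ← hτz] at hrhs
      linarith
    · -- τ > 0 : x/τ is primal feasible with value < v
      set x' : Fin E → ℝ := fun j => x j / τ with hx'
      have hfeas' : Feas A b grp x' := by
        refine ⟨?_, ?_, ?_⟩
        · intro q
          have h1 := hcol1 q
          have hs := hz0 (Sum.inr (Sum.inl q))
          have : (A.mulVec x') q = (∑ j, x j * A q j) / τ := by
            simp only [Matrix.mulVec, dotProduct, hx', Finset.sum_div]
            exact Finset.sum_congr rfl fun j _ => by ring
          rw [this, h1]
          rw [le_div_iff₀ hτpos]
          have : s q ≥ 0 := hs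
          nlinarith
        · intro i
          have h2 := hcol2 i
          have : (∑ j, if grp j = i then x' j else 0) = (∑ j, if grp j = i then x j else 0) / τ := by
            rw [Finset.sum_div]
            refine Finset.sum_congr rfl fun j _ => ?_
            by_cases h' : grp j = i <;> simp [h', hx']
          rw [this, h2, div_self (ne_of_gt hτpos)]
        · intro j
          exact div_nonneg (hz0 (Sum.inl j)) (le_of_lt hτpos)
      have hval : c' ⬝ᵥ x' < v := by
        have : c' ⬝ᵥ x' = (∑ j, x j * c' j) / τ := by
          simp only [dotProduct, hx', Finset.sum_div]
          exact Finset.sum_congr rfl fun j _ => by ring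
        rw [this, div_lt_iff₀ hτpos]
        nlinarith [hrhs]
      exact absurd (hv.2 ⟨x', hfeas', rfl⟩) (not_le.mpr hval)
  obtain ⟨y, hy⟩ := hfeas
  set uq : Fin m → ℝ := fun q => y (.inl q) with huq
  set uv : Fin n → ℝ := fun i => y (.inr i) with huv
  have huq0 : ∀ q, 0 ≤ uq q := by
    intro q
    have := hy (.inr (.inl q))
    rw [Fintype.sum_sum_type] at this
    simp only [hK, hh, ite_mul, neg_mul, one_mul, zero_mul, Finset.sum_ite_eq,
      Finset.mem_univ, if_pos, Finset.sum_const_zero] at this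
    linarith [this]
  have hconstr : ∀ j : Fin E, uv (grp j) + (∑ q, A q j * uq q) ≤ c' j := by
    intro j
    have := hy (.inl j)
    rw [Fintype.sum_sum_type] at this
    simp only [hK, hh, ite_mul, one_mul, zero_mul, Finset.sum_ite_eq,
      Finset.mem_univ, if_pos] at this
    linarith [this]
  have hobj_ge : v ≤ b ⬝ᵥ uq + ∑ i, uv i := by
    have := hy (.inr (.inr ()))
    rw [Fintype.sum_sum_type] at this
    simp only [hK, hh, neg_mul, one_mul, Finset.sum_neg_distrib] at this
    simp only [dotProduct, huq, huv]
    linarith [this]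
  have hdf : DualFeas A c' grp uq uv := ⟨huq0, hconstr⟩
  refine ⟨uq, uv, hdf, le_antisymm ?_ hobj_ge⟩
  -- weak duality
  have hid := key_identity A b c' grp uq uv xstar hxstar.2.1
  have hterm1 : 0 ≤ ∑ j, xstar j * rc A c' grp uq uv j := by
    refine Finset.sum_nonneg fun j _ => mul_nonneg (hxstar.2.2 j) ?_
    have := hconstr j
    simp only [rc]
    linarith
  have hterm2 : 0 ≤ ∑ q, uq q * ((A.mulVec xstar) q - b q) := by
    refine Finset.sum_nonneg fun q _ => mul_nonneg (huq0 q) ?_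
    have := hxstar.1 q
    linarith
  simp only [dualObj] at *
  linarith [hid, hcx.ge, hcx.le]


/-- A complete family of n dual solutions exists: each group {j : grp j = i} is a set of
pairwise incompatible indices, hence (each index lying in some feasible integral
solution) there exist n dual optimal solutions u¹,…,uⁿ such that for every index kl
there is some i with r_{kl}(uⁱ) = R_{kl}. -/
theorem stmt12 {m n E : ℕ} (A : Matrix (Fin m) (Fin E) ℝ) (b : Fin m → ℝ)
    (c : Fin E → ℝ) (grp : Fin E → Fin n) (zstar : ℝ)
    (hz : IsLeast {z | ∃ x : Fin E → ℝ, Feas A b grp x ∧ c ⬝ᵥ x = z} zstar)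
    (hideal : ∀ c' : Fin E → ℝ, (∃ x0 : Fin E → ℝ, Feas A b grp x0) →
      ∃ xt : Fin E → ℝ, Feas A b grp xt ∧ Integral xt ∧
        ∀ y : Fin E → ℝ, Feas A b grp y → c' ⬝ᵥ xt ≤ c' ⬝ᵥ y)
    (hmem : ∀ j : Fin E, ∃ x : Fin E → ℝ, Feas A b grp x ∧ Integral x ∧ x j = 1)
    (R : Fin E → ℝ)
    (hR : ∀ j : Fin E,
      IsLeast {z | ∃ x : Fin E → ℝ, Feas A b grp x ∧ x j = 1 ∧ c ⬝ᵥ x = z}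
        (zstar + R j)) :
    (∀ x : Fin E → ℝ, Feas A b grp x → Integral x →
      ∀ j j' : Fin E, grp j = grp j' → x j = 1 → x j' = 1 → j = j') ∧
    ∃ (uq : Fin n → Fin m → ℝ) (uv : Fin n → Fin n → ℝ),
      (∀ i : Fin n, DualFeas A c grp (uq i) (uv i) ∧ dualObj b (uq i) (uv i) = zstar) ∧
      ∀ kl : Fin E, ∃ i : Fin n, rc A c grp (uq i) (uv i) kl = R kl := by
  classical
  have part1 : ∀ x : Fin E → ℝ, Feas A b grp x → Integral x →
      ∀ j j' : Fin E, grp j = grp j' → x j = 1 → x j' = 1 → j = j' := by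
    intro x hx hint j j' hg hj hj'
    by_contra hne
    have hsum := hx.2.1 (grp j')
    have hnonneg : ∀ j'' ∈ Finset.univ, (0:ℝ) ≤ if grp j'' = grp j' then x j'' else 0 := by
      intro j'' _
      have hx0 : (0:ℝ) ≤ x j'' := hx.2.2 j''
      by_cases h' : grp j'' = grp j' <;> simp [h', hx0]
    have hle := Finset.sum_le_sum_of_subset_of_nonneg
      (Finset.subset_univ ({j, j'} : Finset (Fin E))) (fun j'' h _ => hnonneg j'' h)
    rw [Finset.sum_pair hne] at hle
    rw [if_pos hg, if_pos rfl, hj, hj'] at hle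
    rw [hsum] at hle
    linarith
  have hRpos : ∀ j, 0 ≤ R j := by
    intro j
    obtain ⟨xj, hxj, hxj1, hxjv⟩ := (hR j).1
    have h1 := hz.2 ⟨xj, hxj, rfl⟩
    rw [hxjv] at h1
    linarith
  obtain ⟨xstar, hxstar, hcxstar⟩ := hz.1
  have hrcle : ∀ uq uv, DualFeas A c grp uq uv → dualObj b uq uv = zstar →
      ∀ kl, rc A c grp uq uv kl ≤ R kl := by
    intro uq uv hdf hdo kl
    obtain ⟨xk, hxk, hxk1, hxkv⟩ := (hR kl).1
    have hid := key_identity A b c grp uq uv xk hxk.2.1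
    have hterm : ∀ j ∈ Finset.univ, (0:ℝ) ≤ xk j * rc A c grp uq uv j := by
      intro j _
      refine mul_nonneg (hxk.2.2 j) ?_
      have := hdf.2 j
      simp only [rc]
      linarith
    have hsingle := Finset.single_le_sum hterm (Finset.mem_univ kl)
    rw [hxk1, one_mul] at hsingle
    have hterm2 : 0 ≤ ∑ q, uq q * ((A.mulVec xk) q - b q) := by
      refine Finset.sum_nonneg fun q _ => mul_nonneg (hdf.1 q) ?_
      have := hxk.1 q
      linarith
    rw [hxkv, hdo] at hid
    linarith
  have hfam : ∀ i : Fin n, ∃ uq uv, DualFeas A c grp uq uv ∧ dualObj b uq uv = zstar ∧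
      ∀ j, grp j = i → rc A c grp uq uv j = R j := by
    intro i
    set chat : Fin E → ℝ := fun j => if grp j = i then c j - R j else c j with hchat
    obtain ⟨xt, hxt, hxtint, hxtopt⟩ := hideal chat ⟨xstar, hxstar⟩
    have hsum1 := hxt.2.1 i
    have hex : ∃ j0, grp j0 = i ∧ xt j0 = 1 := by
      by_contra hno
      push_neg at hno
      have hzero : ∑ j, (if grp j = i then xt j else 0) = 0 := by
        refine Finset.sum_eq_zero fun j _ => ?_
        by_cases hgj : grp j = i
        · rcases hxtint j with h0 | h1
          · rw [if_pos hgj, h0]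
          · exact absurd h1 (hno j hgj)
        · rw [if_neg hgj]
      rw [hzero] at hsum1
      linarith
    obtain ⟨j0, hj0g, hj01⟩ := hex
    have hcompute : chat ⬝ᵥ xt = c ⬝ᵥ xt - R j0 := by
      simp only [dotProduct, hchat]
      have hstep : ∑ j, (if grp j = i then c j - R j else c j) * xt j
          = ∑ j, (c j * xt j - if grp j = i then R j * xt j else 0) := by
        refine Finset.sum_congr rfl fun j _ => ?_
        by_cases hgj : grp j = i <;> simp [hgj] <;> ring
      rw [hstep, Finset.sum_sub_distrib]
      congr 1
      rw [Finset.sum_eq_single j0]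
      · rw [if_pos hj0g, hj01, mul_one]
      · intro j _ hjne
        by_cases hgj : grp j = i
        · have hxj0 : xt j = 0 := by
            rcases hxtint j with h0 | h1
            · exact h0
            · exact absurd (part1 xt hxt hxtint j j0 (by rw [hgj, hj0g]) h1 hj01) hjne
          rw [if_pos hgj, hxj0, mul_zero]
        · rw [if_neg hgj]
      · intro habs
        exact absurd (Finset.mem_univ j0) habs
    have hlb : ∀ y, Feas A b grp y → zstar ≤ chat ⬝ᵥ y := by
      intro y hy
      have h1 : zstar ≤ chat ⬝ᵥ xt := by
        rw [hcompute]
        have := (hR j0).2 ⟨xt, hxt, hj01, rfl⟩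
        linarith
      exact h1.trans (hxtopt y hy)
    have hub : chat ⬝ᵥ xstar ≤ zstar := by
      have h1 : chat ⬝ᵥ xstar ≤ c ⬝ᵥ xstar := by
        simp only [dotProduct, hchat]
        refine Finset.sum_le_sum fun j _ => ?_
        by_cases hgj : grp j = i
        · rw [if_pos hgj]
          have h2 := hRpos j
          have h3 : (0:ℝ) ≤ xstar j := hxstar.2.2 j
          nlinarith
        · rw [if_neg hgj]
      rw [hcxstar] at h1
      exact h1
    have hleast : IsLeast {z | ∃ x, Feas A b grp x ∧ chat ⬝ᵥ x = z} zstar := by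
      constructor
      · exact ⟨xstar, hxstar, le_antisymm hub (hlb xstar hxstar)⟩
      · rintro z ⟨y, hy, rfl⟩
        exact hlb y hy
    obtain ⟨uq, uv, hdf, hdo⟩ := strong_dual A b chat grp zstar hleast
    have hdfc : DualFeas A c grp uq uv := by
      refine ⟨hdf.1, fun j => ?_⟩
      have := hdf.2 j
      simp only [hchat] at this
      by_cases hgj : grp j = i
      · rw [if_pos hgj] at this
        linarith [hRpos j]
      · rwa [if_neg hgj] at this
    refine ⟨uq, uv, hdfc, hdo, fun j hgj => ?_⟩
    have hge : R j ≤ rc A c grp uq uv j := by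
      have := hdf.2 j
      simp only [hchat, if_pos hgj] at this
      simp only [rc]
      linarith
    exact le_antisymm (hrcle uq uv hdfc hdo j) hge
  choose uqf uvf hf1 hf2 hf3 using hfam
  exact ⟨part1, uqf, uvf, fun i => ⟨hf1 i, hf2 i⟩, fun kl => ⟨grp kl, hf3 (grp kl) kl rfl⟩⟩
end
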